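/- arXiv:1204.5415 — 5 statements merged into one kernel-verified Lean document; each statement's English description precedes it below -/
import Mathlib

section
/- Let a ≥ 1 and b be integers with gcd(a,b) = 1 and a+b ≥ 1, let l > m ≥ 0 be integers, and let r, r' ∈ [1,a] be coprime to a with r·r' ≡ b (mod a). For a prime p with p ≡ r (mod a), p divides lcm_{mn < i ≤ ln}{a·i+b} if and only if there exists an integer i₀ ≥ 0 such that (b + a·m·n)/(r' + a·i₀) < p ≤ (b + a·l·n)/(r' + a·i₀). -/
open Finset

/-- `L a b l m n` is `lcm_{m n < i ≤ l n} (a i + b)`. -/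
noncomputable def L (a b l m : ℤ) (n : ℕ) : ℤ :=
  (Finset.Icc (m * (n : ℤ) + 1) (l * (n : ℤ))).lcm (fun i => a * i + b)

lemma prime_dvd_finset_lcm {p : ℤ} (hp : Prime p) (s : Finset ℤ) (f : ℤ → ℤ) :
    p ∣ s.lcm f ↔ ∃ i ∈ s, p ∣ f i := by
  classical
  induction s using Finset.induction with
  | empty => simp [Finset.lcm_empty, hp.not_dvd_one]
  | insert _ _ h ih =>
      rename_i x s'
      rw [Finset.lcm_insert]
      constructor
      · intro hd
        rcases hp.dvd_mul.mp (hd.trans (lcm_dvd (dvd_mul_right _ _) (dvd_mul_left _ _))) with h1 | h2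
        · exact ⟨x, Finset.mem_insert_self _ _, h1⟩
        · obtain ⟨i, hi, hdi⟩ := ih.mp h2
          exact ⟨i, Finset.mem_insert_of_mem hi, hdi⟩
      · rintro ⟨i, hi, hdi⟩
        rcases Finset.mem_insert.mp hi with rfl | hi
        · exact hdi.trans (dvd_lcm_left _ _)
        · exact (hdi.trans (Finset.dvd_lcm hi)).trans (dvd_lcm_right _ _)

theorem prime_dvd_lcm_iff_interval (a b l m : ℤ) (ha : 1 ≤ a) (hgcd : Int.gcd a b = 1)
    (hab : 1 ≤ a + b) (hlm : m < l) (hm : 0 ≤ m)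
    (r r' : ℤ) (hr1 : 1 ≤ r) (hra : r ≤ a) (hr'1 : 1 ≤ r') (hr'a : r' ≤ a)
    (hrcop : Int.gcd r a = 1) (hr'cop : Int.gcd r' a = 1)
    (hrr' : r * r' ≡ b [ZMOD a])
    (p : ℕ) (hp : p.Prime) (hpr : (p : ℤ) ≡ r [ZMOD a]) (n : ℕ) (hn : 1 ≤ n) :
    (p : ℤ) ∣ L a b l m n ↔
      ∃ i₀ : ℤ, 0 ≤ i₀ ∧
        ((b + a * m * (n : ℤ) : ℤ) : ℝ) / ((r' + a * i₀ : ℤ) : ℝ) < (p : ℝ) ∧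
        (p : ℝ) ≤ ((b + a * l * (n : ℤ) : ℤ) : ℝ) / ((r' + a * i₀ : ℤ) : ℝ) := by
  have hpZ : Prime (p : ℤ) := Nat.prime_iff_prime_int.mp hp
  have hppos : (0 : ℤ) < p := Int.natCast_pos.mpr hp.pos
  have hn' : (1 : ℤ) ≤ (n : ℤ) := by exact_mod_cast hn
  have hmn : 0 ≤ m * (n : ℤ) := mul_nonneg hm (by linarith)
  rw [L, prime_dvd_finset_lcm hpZ]
  constructor
  · rintro ⟨i, hi, hdi⟩
    rw [Finset.mem_Icc] at hi
    obtain ⟨hi1, hi2⟩ := hi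
    have hpos : 1 ≤ a * i + b := by nlinarith
    obtain ⟨k, hk⟩ := hdi
    have hkpos : 1 ≤ k := by nlinarith
    -- k ≡ r' mod a
    have h1 : r * k ≡ r * r' [ZMOD a] := by
      have e1 : (p : ℤ) * k ≡ r * k [ZMOD a] := hpr.mul_right k
      have e2 : a * i + b ≡ b [ZMOD a] := Int.ModEq.symm (Int.modEq_iff_dvd.mpr ⟨i, by ring⟩)
      have : r * k ≡ b [ZMOD a] := (e1.symm.trans (hk ▸ e2 : (p : ℤ) * k ≡ b [ZMOD a]))
      exact this.trans hrr'.symm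
    have hkr' : k ≡ r' [ZMOD a] := by
      have := Int.ModEq.cancel_left_div_gcd (c := r) (by linarith : (0:ℤ) < a) h1
      rwa [Int.gcd_comm a r, hrcop, Nat.cast_one, Int.ediv_one] at this
    obtain ⟨i₀, hi₀⟩ : ∃ i₀ : ℤ, k = r' + a * i₀ := by
      obtain ⟨c, hc⟩ := Int.modEq_iff_dvd.mp hkr'
      exact ⟨-c, by linarith⟩
    have hi₀0 : 0 ≤ i₀ := by
      by_contra hneg
      push_neg at hneg
      have h4 : a * i₀ ≤ a * (-1) := by
        apply mul_le_mul_of_nonneg_left (by linarith) (by linarith)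
      linarith
    have hkposR : (0 : ℝ) < ((r' + a * i₀ : ℤ) : ℝ) := by
      have : (0 : ℤ) < r' + a * i₀ := by rw [← hi₀]; linarith
      exact_mod_cast this
    have hlb : b + a * m * (n : ℤ) < (p : ℤ) * (r' + a * i₀) := by
      rw [← hi₀, ← hk]; nlinarith
    have hub : (p : ℤ) * (r' + a * i₀) ≤ b + a * l * (n : ℤ) := by
      rw [← hi₀, ← hk]; nlinarith
    refine ⟨i₀, hi₀0, ?_, ?_⟩
    · rw [div_lt_iff₀ hkposR]
      exact_mod_cast hlb
    · rw [le_div_iff₀ hkposR]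
      exact_mod_cast hub
  · rintro ⟨i₀, hi₀0, h1, h2⟩
    set k : ℤ := r' + a * i₀ with hkdef
    have hkpos : (0 : ℤ) < k := by have : 0 ≤ a * i₀ := mul_nonneg (by linarith) hi₀0; linarith
    have hkposR : (0 : ℝ) < ((k : ℤ) : ℝ) := by exact_mod_cast hkpos
    rw [div_lt_iff₀ hkposR] at h1
    rw [le_div_iff₀ hkposR] at h2
    have hlb : b + a * m * (n : ℤ) < (p : ℤ) * k := by exact_mod_cast h1
    have hub : (p : ℤ) * k ≤ b + a * l * (n : ℤ) := by exact_mod_cast h2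
    have hpk : (p : ℤ) * k ≡ b [ZMOD a] := by
      have e1 : (p : ℤ) * k ≡ r * k [ZMOD a] := hpr.mul_right k
      have e2 : r * k ≡ r * r' [ZMOD a] := by
        refine Int.ModEq.symm (Int.modEq_iff_dvd.mpr ⟨r * i₀, ?_⟩)
        rw [hkdef]; ring
      exact (e1.trans e2).trans hrr'
    obtain ⟨c, hc⟩ := Int.modEq_iff_dvd.mp hpk
    -- b - p*k = a*c, so p*k = a*(-c) + b
    refine ⟨-c, ?_, ⟨k, by linarith⟩⟩
    rw [Finset.mem_Icc]
    have hpk' : (p : ℤ) * k = a * (-c) + b := by linarith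
    constructor
    · have h3 : a * (m * (n:ℤ)) < a * (-c) := by linarith
      have := lt_of_mul_lt_mul_left h3 (by linarith : (0:ℤ) ≤ a)
      linarith
    · have h3 : a * (-c) ≤ a * (l * (n:ℤ)) := by linarith
      exact le_of_mul_le_mul_left h3 (by linarith)
end

section
/- Let a ≥ 1, let l > m ≥ 0 be integers, let r' ∈ [1,a] with gcd(r',a)=1, and set H = ⌊(a·l − (l−m)·r')/(a·(l−m))⌋. Then for every positive integer n and every integer b with 1 ≤ b ≤ a, one has (l−m)·n < (b + a·l·n)/(r' + a·H). -/
theorem key_inequality_upper (a l m r' : ℤ) (ha : 1 ≤ a) (hlm : m < l) (hm : 0 ≤ m)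
    (hr'1 : 1 ≤ r') (hr'a : r' ≤ a) (hr'cop : Int.gcd r' a = 1)
    (H : ℤ) (hH : H = ⌊((a * l - (l - m) * r' : ℤ) : ℝ) / ((a * (l - m) : ℤ) : ℝ)⌋) :
    ∀ n : ℕ, 1 ≤ n → ∀ b : ℤ, 1 ≤ b → b ≤ a →
      (((l - m) * (n : ℤ) : ℤ) : ℝ) <
        ((b + a * l * (n : ℤ) : ℤ) : ℝ) / ((r' + a * H : ℤ) : ℝ) := by
  intro n hn b hb1 hba
  have hD : (0 : ℤ) < a * (l - m) := by nlinarith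
  have hN : (0 : ℤ) ≤ a * l - (l - m) * r' := by nlinarith
  have hDr : (0 : ℝ) < ((a * (l - m) : ℤ) : ℝ) := by exact_mod_cast hD
  have hfle : (H : ℝ) ≤ ((a * l - (l - m) * r' : ℤ) : ℝ) / ((a * (l - m) : ℤ) : ℝ) :=
    hH ▸ Int.floor_le _
  have hH0 : (0 : ℤ) ≤ H := by
    rw [hH]
    apply Int.le_floor.mpr
    push_cast
    apply div_nonneg
    · exact_mod_cast hN
    · push_cast at hDr; exact hDr.le
  have key : a * (l - m) * H ≤ a * l - (l - m) * r' := by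
    have h := (le_div_iff₀ hDr).mp hfle
    have : ((a * (l - m) * H : ℤ) : ℝ) ≤ ((a * l - (l - m) * r' : ℤ) : ℝ) := by
      push_cast at h ⊢; linarith
    exact_mod_cast this
  have hden : (0 : ℤ) < r' + a * H := by nlinarith
  have hn' : (1 : ℤ) ≤ (n : ℤ) := by exact_mod_cast hn
  have hint : (l - m) * (n : ℤ) * (r' + a * H) < b + a * l * (n : ℤ) := by
    nlinarith [mul_le_mul_of_nonneg_left key (by linarith : (0 : ℤ) ≤ (n : ℤ))]
  rw [lt_div_iff₀ (by exact_mod_cast hden)]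
  exact_mod_cast hint
end

section
/- Let a ≥ 1, let l > m ≥ 0 be integers, let b, r' ∈ [1,a] with gcd(r',a) = gcd(b,a) = 1, and set H = ⌊(a·l − (l−m)·r')/(a·(l−m))⌋. If l ≤ (a+r')·m/r' (so H ≥ 1), then for every positive integer n, (b + a·m·n)/(r' + a·H) < (l−m)·n + 1. -/
theorem key_inequality_lower (a l m b r' : ℤ) (ha : 1 ≤ a) (hlm : m < l) (hm : 0 ≤ m)
    (hb1 : 1 ≤ b) (hba : b ≤ a) (hr'1 : 1 ≤ r') (hr'a : r' ≤ a)
    (hr'cop : Int.gcd r' a = 1) (hbcop : Int.gcd b a = 1)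
    (H : ℤ) (hH : H = ⌊((a * l - (l - m) * r' : ℤ) : ℝ) / ((a * (l - m) : ℤ) : ℝ)⌋)
    (hcase : (l : ℝ) ≤ (((a + r') * m : ℤ) : ℝ) / (r' : ℝ)) :
    ∀ n : ℕ, 1 ≤ n →
      ((b + a * m * (n : ℤ) : ℤ) : ℝ) / ((r' + a * H : ℤ) : ℝ) <
        (((l - m) * (n : ℤ) : ℤ) : ℝ) + 1 := by
  intro n hn
  have hn1 : (1:ℤ) ≤ (n:ℤ) := by exact_mod_cast hn
  have hlm' : (0:ℤ) < l - m := by linarith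
  have hden : (0:ℤ) < a * (l - m) := by positivity
  have hr'R : (0:ℝ) < (r':ℝ) := by exact_mod_cast lt_of_lt_of_le one_pos hr'1
  have hcaseZ : l * r' ≤ (a + r') * m := by
    rw [le_div_iff₀ hr'R] at hcase
    exact_mod_cast hcase
  have hdenR : (0:ℝ) < ((a*(l-m):ℤ):ℝ) := by exact_mod_cast hden
  have h1R : (H:ℝ) ≤ ((a * l - (l - m) * r' : ℤ) : ℝ) / ((a * (l - m) : ℤ) : ℝ) := by
    rw [hH]; exact Int.floor_le _
  have h2R : ((a * l - (l - m) * r' : ℤ) : ℝ) / ((a * (l - m) : ℤ) : ℝ) < (H:ℝ) + 1 := by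
    rw [hH]; exact Int.lt_floor_add_one _
  have h1Z : H * (a*(l-m)) ≤ a * l - (l - m) * r' := by
    have := (le_div_iff₀ hdenR).mp h1R
    exact_mod_cast this
  have h2Z : a * l - (l - m) * r' < (H + 1) * (a*(l-m)) := by
    have := (div_lt_iff₀ hdenR).mp h2R
    exact_mod_cast this
  have hnum_ge : a * (l - m) ≤ a * l - (l - m) * r' := by nlinarith
  have hH1 : 1 ≤ H := by nlinarith
  have hDb : b < r' + a * H := by nlinarith [mul_le_mul_of_nonneg_left hH1 (by linarith : (0:ℤ) ≤ a)]
  have hDlm : a * m < (l - m) * (r' + a * H) := by nlinarith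
  have hstep : a * m + 1 ≤ (l - m) * (r' + a * H) := hDlm
  have key : b + a * m * (n:ℤ) < (r' + a * H) * ((l - m) * (n:ℤ) + 1) := by
    nlinarith [mul_le_mul_of_nonneg_right hstep (by linarith : (0:ℤ) ≤ (n:ℤ))]
  have hDpos : (0:ℝ) < ((r' + a * H : ℤ):ℝ) := by
    have : (0:ℤ) < r' + a * H := by linarith
    exact_mod_cast this
  rw [div_lt_iff₀ hDpos]
  have keyR : ((b + a * m * (n:ℤ) : ℤ):ℝ) < ((r' + a * H : ℤ):ℝ) * ((((l - m) * (n:ℤ) : ℤ):ℝ) + 1) := by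
    push_cast
    exact_mod_cast key
  linarith [keyR]
end

section
/- Let a ≥ 1, let l > m ≥ 0 be integers, let b, r' ∈ [1,a], and set H = ⌊(a·l − (l−m)·r')/(a·(l−m))⌋. Then for every integer i with 1 ≤ i ≤ H and every positive integer n, (b + a·m·n)/(r' + a·(i−1)) > (b + a·l·n)/(r' + a·i); consequently the intervals ((b+amn)/(r'+ai), (b+aln)/(r'+ai)] for 0 ≤ i ≤ H are pairwise disjoint. -/
theorem intervals_disjoint (a l m b r' : ℤ) (ha : 1 ≤ a) (hlm : m < l) (hm : 0 ≤ m)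
    (hb1 : 1 ≤ b) (hba : b ≤ a) (hr'1 : 1 ≤ r') (hr'a : r' ≤ a)
    (H : ℤ) (hH : H = ⌊((a * l - (l - m) * r' : ℤ) : ℝ) / ((a * (l - m) : ℤ) : ℝ)⌋) :
    (∀ n : ℕ, 1 ≤ n → ∀ i : ℤ, 1 ≤ i → i ≤ H →
      ((b + a * m * (n : ℤ) : ℤ) : ℝ) / ((r' + a * (i - 1) : ℤ) : ℝ) >
        ((b + a * l * (n : ℤ) : ℤ) : ℝ) / ((r' + a * i : ℤ) : ℝ)) ∧
    (∀ n : ℕ, 1 ≤ n → ∀ i j : ℤ, 0 ≤ i → i < j → j ≤ H →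
      Disjoint
        (Set.Ioc (((b + a * m * (n : ℤ) : ℤ) : ℝ) / ((r' + a * i : ℤ) : ℝ))
          (((b + a * l * (n : ℤ) : ℤ) : ℝ) / ((r' + a * i : ℤ) : ℝ)))
        (Set.Ioc (((b + a * m * (n : ℤ) : ℤ) : ℝ) / ((r' + a * j : ℤ) : ℝ))
          (((b + a * l * (n : ℤ) : ℤ) : ℝ) / ((r' + a * j : ℤ) : ℝ)))) := by
  have hqZ : (0 : ℤ) < a * (l - m) := by nlinarith
  have hq : (0 : ℝ) < ((a * (l - m) : ℤ) : ℝ) := by exact_mod_cast hqZ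
  have key : a * (l - m) * H ≤ a * l - (l - m) * r' := by
    have h1 : (H : ℝ) ≤ ((a * l - (l - m) * r' : ℤ) : ℝ) / ((a * (l - m) : ℤ) : ℝ) := by
      rw [hH]; exact Int.floor_le _
    have h2 := (le_div_iff₀ hq).mp h1
    have h3 : ((H * (a * (l - m)) : ℤ) : ℝ) ≤ ((a * l - (l - m) * r' : ℤ) : ℝ) := by
      push_cast at h2 ⊢; linarith
    have := Int.cast_le.mp h3
    linarith
  have part1 : ∀ n : ℕ, 1 ≤ n → ∀ i : ℤ, 1 ≤ i → i ≤ H →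
      ((b + a * m * (n : ℤ) : ℤ) : ℝ) / ((r' + a * (i - 1) : ℤ) : ℝ) >
        ((b + a * l * (n : ℤ) : ℤ) : ℝ) / ((r' + a * i : ℤ) : ℝ) := by
    intro n hn i hi hiH
    have hn1 : (1 : ℤ) ≤ (n : ℤ) := by exact_mod_cast hn
    have hd1 : (0 : ℝ) < ((r' + a * (i - 1) : ℤ) : ℝ) := by
      have : (0 : ℤ) < r' + a * (i - 1) := by nlinarith
      exact_mod_cast this
    have hd2 : (0 : ℝ) < ((r' + a * i : ℤ) : ℝ) := by
      have : (0 : ℤ) < r' + a * i := by nlinarith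
      exact_mod_cast this
    rw [gt_iff_lt, div_lt_div_iff₀ hd2 hd1]
    have hX : 0 ≤ a * l - (l - m) * r' - a * (l - m) * i := by
      nlinarith [mul_le_mul_of_nonneg_left hiH hqZ.le]
    have hZ : (b + a * l * (n : ℤ)) * (r' + a * (i - 1)) <
        (b + a * m * (n : ℤ)) * (r' + a * i) := by
      nlinarith [mul_nonneg (show (0:ℤ) ≤ a by linarith)
        (mul_nonneg (show (0:ℤ) ≤ (n:ℤ) by linarith) hX),
        mul_pos (show (0:ℤ) < a by linarith) (show (0:ℤ) < b by linarith)]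
    exact_mod_cast hZ
  refine ⟨part1, ?_⟩
  intro n hn i j hi hij hjH
  have hn1 : (1 : ℤ) ≤ (n : ℤ) := by exact_mod_cast hn
  have chain : ((b + a * m * (n : ℤ) : ℤ) : ℝ) / ((r' + a * i : ℤ) : ℝ) >
      ((b + a * l * (n : ℤ) : ℤ) : ℝ) / ((r' + a * j : ℤ) : ℝ) := by
    have hstep : ∀ k : ℤ, i + 1 ≤ k → k ≤ H →
        ((b + a * m * (n : ℤ) : ℤ) : ℝ) / ((r' + a * i : ℤ) : ℝ) >
          ((b + a * l * (n : ℤ) : ℤ) : ℝ) / ((r' + a * k : ℤ) : ℝ) := by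
      refine Int.le_induction ?_ ?_
      · intro hkH
        have := part1 n hn (i + 1) (by linarith) hkH
        simpa using this
      · intro k hk ih hkH
        have h1 := ih (by linarith)
        have h2 := part1 n hn (k + 1) (by linarith) hkH
        simp only [add_sub_cancel_right] at h2
        have hd : (0 : ℝ) < ((r' + a * k : ℤ) : ℝ) := by
          have : (0 : ℤ) < r' + a * k := by nlinarith
          exact_mod_cast this
        have h3 : ((b + a * m * (n : ℤ) : ℤ) : ℝ) / ((r' + a * k : ℤ) : ℝ) ≤
            ((b + a * l * (n : ℤ) : ℤ) : ℝ) / ((r' + a * k : ℤ) : ℝ) := by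
          gcongr
        linarith
    exact hstep j (by linarith) hjH
  rw [Set.disjoint_left]
  intro x hx1 hx2
  have := hx1.1
  have := hx2.2
  linarith
end

section
/- Let a ≥ 1 and b be integers with 1 ≤ b ≤ a, gcd(a,b) = 1, let l > m ≥ 0 be integers, let r, r' ∈ [1,a] be coprime to a with r·r' ≡ b (mod a), and suppose l·r' > (a+r')·m. Then for all sufficiently large n, every prime p ≡ r (mod a) with p ≤ (b+a·l·n)/r' and p ∉ ((l−m)·n, (l−m)·n + b/r'] divides lcm_{mn < i ≤ ln}{a·i+b}. -/
open Finset Filter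

theorem case_one_prime_coverage (a b l m r r' : ℤ) (ha : 1 ≤ a)
    (hb1 : 1 ≤ b) (hba : b ≤ a) (hgcd : Int.gcd a b = 1) (hlm : m < l) (hm : 0 ≤ m)
    (hr1 : 1 ≤ r) (hra : r ≤ a) (hr'1 : 1 ≤ r') (hr'a : r' ≤ a)
    (hrcop : Int.gcd r a = 1) (hr'cop : Int.gcd r' a = 1)
    (hrr' : r * r' ≡ b [ZMOD a]) (hcase : (a + r') * m < l * r') :
    ∃ N : ℕ, ∀ n : ℕ, N ≤ n → ∀ p : ℕ, p.Prime → (p : ℤ) ≡ r [ZMOD a] →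
      (p : ℝ) ≤ ((b + a * l * (n : ℤ) : ℤ) : ℝ) / (r' : ℝ) →
      (p : ℝ) ∉ Set.Ioc (((l - m) * (n : ℤ) : ℤ) : ℝ)
        ((((l - m) * (n : ℤ) : ℤ) : ℝ) + (b : ℝ) / (r' : ℝ)) →
      (p : ℤ) ∣ L a b l m n := by
  refine ⟨0, fun n _ p hp hpr hple hpexc => ?_⟩
  have hr'R : (0:ℝ) < (r' : ℝ) := by exact_mod_cast hr'1
  have hp0 : (0:ℤ) < (p:ℤ) := by exact_mod_cast hp.pos
  -- p * r' ≡ b [ZMOD a]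
  have hmod : (p:ℤ) * r' ≡ b [ZMOD a] := (hpr.mul_right r').trans hrr'
  obtain ⟨c, hc⟩ : a ∣ (p:ℤ) * r' - b := Int.ModEq.dvd hmod.symm
  -- so a * c + b = r' * p
  have hcb : a * c + b = r' * (p:ℤ) := by linarith [hc]
  -- integer form of the upper bound
  have hple' : r' * (p:ℤ) ≤ b + a * l * n := by
    have h2 : (p:ℝ) * (r':ℝ) ≤ ((b + a * l * (n:ℤ) : ℤ) : ℝ) := (le_div_iff₀ hr'R).mp hple
    push_cast at h2
    have h3 : ((r' * (p:ℤ) : ℤ) : ℝ) ≤ ((b + a * l * (n:ℤ) : ℤ) : ℝ) := by push_cast; linarith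
    exact_mod_cast h3
  have hcle : c ≤ l * n := by nlinarith
  -- find i in the interval with p ∣ a * i + b
  have key : ∃ i : ℤ, m * n + 1 ≤ i ∧ i ≤ l * n ∧ (p:ℤ) ∣ a * i + b := by
    by_cases hsmall : (p:ℤ) ≤ (l - m) * n
    · -- shift c by multiples of p
      set t : ℤ := (l * n - c) / p with ht
      have hdm := Int.mul_ediv_add_emod (l * n - c) p
      have hm0 : 0 ≤ (l * n - c) % p := Int.emod_nonneg _ (ne_of_gt hp0)
      have hm1 : (l * n - c) % p < p := Int.emod_lt_of_pos _ hp0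
      refine ⟨c + t * p, ?_, ?_, ⟨r' + a * t, by linear_combination hcb⟩⟩
      · nlinarith [hdm, hm0, hm1, hsmall]
      · nlinarith [hdm, hm0]
    · -- p is large: use i = c directly
      push_neg at hsmall
      have hxR : (((l - m) * (n:ℤ) : ℤ) : ℝ) + (b:ℝ)/(r':ℝ) < (p:ℝ) := by
        by_contra hcon
        push_neg at hcon
        exact hpexc ⟨by exact_mod_cast hsmall, hcon⟩
      have hx : r' * ((l - m) * n) + b < r' * (p:ℤ) := by
        have h4 := mul_lt_mul_of_pos_left hxR hr'R
        rw [mul_add, mul_div_cancel₀ _ hr'R.ne'] at h4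
        have h3 : ((r' * ((l - m) * (n:ℤ)) + b : ℤ) : ℝ) < ((r' * (p:ℤ) : ℤ) : ℝ) := by
          push_cast at h4 ⊢
          linarith
        exact_mod_cast h3
      have hn0 : (0:ℤ) ≤ (n:ℤ) := Int.natCast_nonneg n
      have hstep : a * m + 1 ≤ r' * (l - m) := by linarith
      have hcgt : m * n + 1 ≤ c := by
        have h5 : a * (m * n) < a * c := by
          nlinarith [mul_le_mul_of_nonneg_right hstep hn0]
        have h6 := lt_of_mul_lt_mul_left h5 (by linarith : (0:ℤ) ≤ a)
        linarith
      exact ⟨c, hcgt, hcle, ⟨r', by linarith [hcb]⟩⟩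
  obtain ⟨i, hi1, hi2, hdvd⟩ := key
  exact hdvd.trans (Finset.dvd_lcm (Finset.mem_Icc.mpr ⟨hi1, hi2⟩))
end
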